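/- Summing the product formula over all S-paths recovers the total number of set partitions: the sum, over all S-paths S of m+1 coordinates, of ∏_{j: S_j > S_{j-1}} C(j-1-S_{j-1}, j-S_j) equals the Bell number B_m. -/

import Mathlib

open scoped Classical

def IsSPath (m : ℕ) (S : ℕ → ℕ) : Prop :=
  S 0 = 0 ∧ S m = m ∧ ∀ j, 1 ≤ j → j < m → S j ≤ min j (S (j + 1))

def IsPartitionOf (m : ℕ) (P : Finset (Finset ℕ)) : Prop :=
  (∀ C ∈ P, C.Nonempty ∧ C ⊆ Finset.Icc 1 m) ∧
  (∀ i ∈ Finset.Icc 1 m, ∃! C, C ∈ P ∧ i ∈ C)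

/-- A tuple `S : Fin (m+1) → Fin (m+1)` regarded as a function `ℕ → ℕ`. -/
def pathFun (m : ℕ) (S : Fin (m + 1) → Fin (m + 1)) : ℕ → ℕ :=
  fun j => if h : j < m + 1 then (S ⟨j, h⟩ : ℕ) else j

open Finset

/-- number of elements in "closed" blocks at time j -/
def closedCard (P : Finset (Finset ℕ)) (j : ℕ) : ℕ :=
  ∑ C ∈ P.filter (fun C => ∀ x ∈ C, x ≤ j), C.card

noncomputable def PartsF (G : Finset ℕ) : Finset (Finset (Finset ℕ)) :=
  G.powerset.powerset.filter (fun P =>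
    (∀ C ∈ P, C.Nonempty) ∧ (∀ C ∈ P, ∀ D ∈ P, C ≠ D → Disjoint C D) ∧ P.biUnion id = G)

lemma mem_PartsF {G : Finset ℕ} {P : Finset (Finset ℕ)} :
    P ∈ PartsF G ↔ (∀ C ∈ P, C.Nonempty) ∧ (∀ C ∈ P, ∀ D ∈ P, C ≠ D → Disjoint C D) ∧
      P.biUnion id = G := by
  simp only [PartsF, mem_filter, mem_powerset, and_iff_right_iff_imp]
  rintro ⟨-, -, hU⟩ C hC
  simp only [mem_powerset]
  exact hU ▸ Finset.subset_biUnion_of_mem id hC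

def blockOf (P : Finset (Finset ℕ)) (x : ℕ) : Finset ℕ :=
  (P.filter (fun C => x ∈ C)).biUnion id

lemma blockOf_eq {P : Finset (Finset ℕ)}
    (hdisj : ∀ C ∈ P, ∀ D ∈ P, C ≠ D → Disjoint C D) {C : Finset ℕ} (hC : C ∈ P)
    {x : ℕ} (hx : x ∈ C) : blockOf P x = C := by
  have h : P.filter (fun D => x ∈ D) = {C} := by
    ext D
    simp only [mem_filter, mem_singleton]
    constructor
    · rintro ⟨hD, hxD⟩
      by_contra hne
      exact (Finset.disjoint_left.1 (hdisj D hD C hC hne)) hxD hx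
    · rintro rfl; exact ⟨hC, hx⟩
  simp [blockOf, h]

noncomputable def fiberF (m t : ℕ) (S : ℕ → ℕ) (O : Finset ℕ) : Finset (Finset (Finset ℕ)) :=
  (PartsF (O ∪ Finset.Icc (t+1) m)).filter (fun P =>
    (∀ C ∈ P, ∃ x ∈ C, t < x) ∧ ∀ j, t < j → j ≤ m → closedCard P j + S t = S j)

lemma fiber_block_facts {m t : ℕ} {S : ℕ → ℕ} {O : Finset ℕ} (hOsub : O ⊆ Finset.Icc 1 t)
    (hc : S t < S (t+1)) (htm : t < m) {P : Finset (Finset ℕ)} (hP : P ∈ fiberF m t S O) :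
    blockOf P (t+1) ∈ P ∧ (t+1) ∈ blockOf P (t+1) ∧
    (blockOf P (t+1)).erase (t+1) ⊆ O ∧
    (blockOf P (t+1)).card + S t = S (t+1) ∧
    P.filter (fun C => ∀ x ∈ C, x ≤ t+1) = {blockOf P (t+1)} := by
  rw [fiberF, mem_filter, mem_PartsF] at hP
  obtain ⟨⟨hne, hdisj, hU⟩, hgt, hcond⟩ := hP
  have h1 : closedCard P (t+1) + S t = S (t+1) := hcond (t+1) (by omega) (by omega)
  have hpos : 0 < closedCard P (t+1) := by omega
  have hfne : (P.filter (fun C => ∀ x ∈ C, x ≤ t+1)).Nonempty := by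
    rw [Finset.nonempty_iff_ne_empty]
    intro h
    rw [closedCard, h, Finset.sum_empty] at hpos
    omega
  obtain ⟨B, hBf⟩ := hfne
  obtain ⟨hB, hBle⟩ := mem_filter.1 hBf
  have hBt : t + 1 ∈ B := by
    obtain ⟨x, hx, hgtx⟩ := hgt B hB
    have hxle := hBle x hx
    have : x = t + 1 := by omega
    exact this ▸ hx
  have hblock : blockOf P (t+1) = B := blockOf_eq hdisj hB hBt
  have hfil : P.filter (fun C => ∀ x ∈ C, x ≤ t+1) = {B} := by
    ext C
    simp only [mem_filter, mem_singleton]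
    constructor
    · rintro ⟨hC, hCle⟩
      by_contra hne'
      have hCt : t + 1 ∈ C := by
        obtain ⟨x, hx, hgtx⟩ := hgt C hC
        have hxle := hCle x hx
        have : x = t + 1 := by omega
        exact this ▸ hx
      exact (Finset.disjoint_left.1 (hdisj C hC B hB hne')) hCt hBt
    · rintro rfl
      exact ⟨hB, hBle⟩
  have hcc : closedCard P (t+1) = B.card := by
    rw [closedCard, hfil, Finset.sum_singleton]
  have hsub : B.erase (t+1) ⊆ O := by
    intro x hx
    have hxne : x ≠ t + 1 := Finset.ne_of_mem_erase hx
    have hxB : x ∈ B := Finset.mem_of_mem_erase hx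
    have hxg : x ∈ O ∪ Finset.Icc (t+1) m := by
      rw [← hU]
      exact Finset.mem_biUnion.2 ⟨B, hB, hxB⟩
    rcases Finset.mem_union.1 hxg with h | h
    · exact h
    · have := Finset.mem_Icc.1 h
      have := hBle x hxB
      omega
  rw [hblock]
  exact ⟨hB, hBt, hsub, by omega, hfil⟩

lemma insert_block_facts {m t : ℕ} {S : ℕ → ℕ} {O B' : Finset ℕ} (hOsub : O ⊆ Finset.Icc 1 t)
    (hB'O : B' ⊆ O) {Q : Finset (Finset ℕ)} (hQ : Q ∈ fiberF m (t+1) S (O \ B')) :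
    (insert (t+1) B') ∉ Q ∧
    (∀ C ∈ insert (insert (t+1) B') Q, ∀ D ∈ insert (insert (t+1) B') Q,
      C ≠ D → Disjoint C D) := by
  rw [fiberF, mem_filter, mem_PartsF] at hQ
  obtain ⟨⟨hne, hdisj, hU⟩, hgt, hcond⟩ := hQ
  have hOle : ∀ x ∈ O, 1 ≤ x ∧ x ≤ t := fun x hx => Finset.mem_Icc.1 (hOsub hx)
  have hB0le : ∀ x ∈ insert (t+1) B', x ≤ t + 1 := by
    intro x hx
    rcases Finset.mem_insert.1 hx with rfl | hx
    · exact le_refl _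
    · have := hOle x (hB'O hx); omega
  have hdisjB0 : ∀ C ∈ Q, Disjoint (insert (t+1) B') C := by
    intro C hC
    rw [Finset.disjoint_left]
    intro x hxB0 hxC
    have hxg : x ∈ (O \ B') ∪ Finset.Icc (t+2) m := by
      rw [← hU]; exact Finset.mem_biUnion.2 ⟨C, hC, hxC⟩
    rcases Finset.mem_insert.1 hxB0 with rfl | hxB'
    · rcases Finset.mem_union.1 hxg with h | h
      · have := hOle _ (Finset.mem_sdiff.1 h).1; omega
      · have := Finset.mem_Icc.1 h; omega
    · rcases Finset.mem_union.1 hxg with h | h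
      · exact (Finset.mem_sdiff.1 h).2 hxB'
      · have := Finset.mem_Icc.1 h
        have := hOle _ (hB'O hxB'); omega
  have hB0Q : (insert (t+1) B') ∉ Q := by
    intro h
    obtain ⟨x, hx, hgtx⟩ := hgt _ h
    exact absurd (hB0le x hx) (by omega)
  refine ⟨hB0Q, ?_⟩
  intro C hC D hD hne'
  rcases Finset.mem_insert.1 hC with rfl | hC <;> rcases Finset.mem_insert.1 hD with rfl | hD
  · exact absurd rfl hne'
  · exact hdisjB0 D hD
  · exact (hdisjB0 C hC).symm
  · exact hdisj C hC D hD hne'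

lemma count_lemma (m : ℕ) (S : ℕ → ℕ) (hS0 : S 0 = 0) (hSm : S m = m)
    (hS : ∀ j, 1 ≤ j → j < m → S j ≤ j ∧ S j ≤ S (j+1)) :
    ∀ n t, t + n = m → ∀ O : Finset ℕ, O ⊆ Finset.Icc 1 t → O.card + S t = t →
    (fiberF m t S O).card
      = ∏ j ∈ (Finset.Ioc t m).filter (fun j => S (j-1) < S j),
          Nat.choose (j - 1 - S (j-1)) (j - S j) := by
  intro n
  induction n with
  | zero =>
    intro t ht O hOsub hOcard
    subst ht
    simp only [Nat.add_zero] at *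
    have hO : O = ∅ := by
      have : O.card = 0 := by omega
      exact Finset.card_eq_zero.1 this
    subst hO
    have hIoc : Finset.Ioc t t = ∅ := by simp
    rw [hIoc]
    simp only [Finset.filter_empty, Finset.prod_empty]
    have : fiberF t t S ∅ = {∅} := by
      ext P
      simp only [fiberF, mem_filter, mem_PartsF, mem_singleton]
      constructor
      · rintro ⟨⟨hne, hdisj, hU⟩, -, -⟩
        have hg : (∅ ∪ Finset.Icc (t+1) t) = (∅ : Finset ℕ) := by
          simp [Finset.Icc_eq_empty_of_lt]
        rw [hg] at hU
        by_contra hP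
        obtain ⟨C, hC⟩ := Finset.nonempty_iff_ne_empty.2 hP
        obtain ⟨x, hx⟩ := hne C hC
        have : x ∈ P.biUnion id := Finset.mem_biUnion.2 ⟨C, hC, hx⟩
        simp [hU] at this
      · rintro rfl
        refine ⟨⟨by simp, by simp, ?_⟩, by simp, fun j hj hj' => by omega⟩
        simp [Finset.Icc_eq_empty_of_lt]
    rw [this]; simp
  | succ n ih =>
    intro t ht O hOsub hOcard
    have htm : t < m := by omega
    have hmono : S t ≤ S (t+1) := by
      rcases Nat.eq_zero_or_pos t with h0 | h0
      · subst h0; rw [hS0]; exact Nat.zero_le _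
      · exact (hS t h0 htm).2
    have hub : S (t+1) ≤ t + 1 := by
      rcases eq_or_lt_of_le (Nat.succ_le_of_lt htm) with h | h
      · rw [show t+1 = m from h, hSm]
      · exact (hS (t+1) (by omega) h).1
    have hOt : ∀ x ∈ O, 1 ≤ x ∧ x ≤ t := by
      intro x hx; exact Finset.mem_Icc.1 (hOsub hx)
    rcases eq_or_lt_of_le hmono with hc | hc
    · -- no block closes at t+1
      have hnotin : (t+1) ∉ O := fun h => by have := hOt _ h; omega
      have hground : O ∪ Finset.Icc (t+1) m = insert (t+1) O ∪ Finset.Icc (t+2) m := by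
        ext x
        simp only [mem_union, mem_insert, mem_Icc]
        by_cases hxO : x ∈ O
        · have := hOt x hxO
          exact ⟨fun _ => Or.inl (Or.inr hxO), fun _ => Or.inl hxO⟩
        · constructor
          · rintro (h | h)
            · exact absurd h hxO
            · rcases eq_or_lt_of_le h.1 with he | he
              · exact Or.inl (Or.inl he.symm)
              · exact Or.inr ⟨by omega, h.2⟩
          · rintro ((rfl | h) | h)
            · exact Or.inr ⟨le_refl _, by omega⟩
            · exact absurd h hxO
            · exact Or.inr ⟨by omega, h.2⟩
      have hfib : fiberF m t S O = fiberF m (t+1) S (insert (t+1) O) := by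
        unfold fiberF
        rw [hground]
        ext P
        simp only [mem_filter]
        constructor
        · rintro ⟨hP, hgt, hcond⟩
          rw [mem_PartsF] at hP
          have hzero : closedCard P (t+1) = 0 := by
            have := hcond (t+1) (by omega) (by omega); omega
          have hgt' : ∀ C ∈ P, ∃ x ∈ C, t+1 < x := by
            intro C hC
            by_contra hno
            push_neg at hno
            have hCin : C ∈ P.filter (fun C => ∀ x ∈ C, x ≤ t+1) :=
              mem_filter.2 ⟨hC, fun x hx => hno x hx⟩
            obtain ⟨y, hy⟩ := hP.1 C hC
            have h1 : 0 < C.card := Finset.card_pos.2 ⟨y, hy⟩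
            have h2 : C.card ≤ closedCard P (t+1) :=
              Finset.single_le_sum (f := fun C : Finset ℕ => C.card)
                (fun i _ => Nat.zero_le _) hCin
            omega
          exact ⟨mem_PartsF.2 hP, hgt',
            fun j hj hj' => by have := hcond j (by omega) hj'; omega⟩
        · rintro ⟨hP, hgt, hcond⟩
          refine ⟨hP, fun C hC => ?_, fun j hj hj' => ?_⟩
          · obtain ⟨x, hx, hx'⟩ := hgt C hC; exact ⟨x, hx, by omega⟩
          · rcases eq_or_lt_of_le (show t + 1 ≤ j from hj) with hj1 | hj1
            · have hje : j = t + 1 := hj1.symm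
              subst hje
              have hfe : P.filter (fun C => ∀ x ∈ C, x ≤ t+1) = ∅ := by
                rw [Finset.filter_eq_empty_iff]
                intro C hC hall
                obtain ⟨x, hx, hx'⟩ := hgt C hC
                exact absurd (hall x hx) (by omega)
              have hz : closedCard P (t+1) = 0 := by
                rw [closedCard, hfe, Finset.sum_empty]
              omega
            · have := hcond j (by omega) hj'; omega
      have hsub' : insert (t+1) O ⊆ Finset.Icc 1 (t+1) := by
        intro x hx
        rcases Finset.mem_insert.1 hx with rfl | hx
        · simp
        · have := hOt x hx; simp only [Finset.mem_Icc]; omega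
      have hcard' : (insert (t+1) O).card + S (t+1) = t+1 := by
        rw [Finset.card_insert_of_notMem hnotin]; omega
      rw [hfib, ih (t+1) (by omega) _ hsub' hcard']
      congr 1
      ext j
      simp only [mem_filter, mem_Ioc]
      constructor
      · rintro ⟨⟨h1, h2⟩, h3⟩
        exact ⟨⟨by omega, h2⟩, h3⟩
      · rintro ⟨⟨h1, h2⟩, h3⟩
        have hne : j ≠ t+1 := by
          rintro rfl
          rw [Nat.add_sub_cancel] at h3
          omega
        exact ⟨⟨by omega, h2⟩, h3⟩
    · -- a block closes at t+1
      have hd1 : S (t+1) = S t + (S (t+1) - S t - 1) + 1 := by omega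
      set d := S (t+1) - S t - 1 with hddef
      have hdO : d ≤ O.card := by omega
      have hstep1 : (fiberF m t S O).card = ∑ B' ∈ O.powersetCard d,
          ((fiberF m t S O).filter (fun P => (blockOf P (t+1)).erase (t+1) = B')).card := by
        apply Finset.card_eq_sum_card_fiberwise
        intro P hP
        obtain ⟨hBP, hBmem, hBsub, hBcard, hfil⟩ := fiber_block_facts hOsub hc htm hP
        simp only [Finset.mem_coe]
        rw [Finset.mem_powersetCard]
        refine ⟨hBsub, ?_⟩
        rw [Finset.card_erase_of_mem hBmem]
        omega
      have hstep2 : ∀ B' ∈ O.powersetCard d,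
          ((fiberF m t S O).filter (fun P => (blockOf P (t+1)).erase (t+1) = B')).card
            = (fiberF m (t+1) S (O \ B')).card := by
        intro B' hB'
        obtain ⟨hB'O, hB'card⟩ := Finset.mem_powersetCard.1 hB'
        have hB'le : ∀ x ∈ B', 1 ≤ x ∧ x ≤ t := fun x hx => hOt x (hB'O hx)
        have htB' : t + 1 ∉ B' := fun h => by have := hB'le _ h; omega
        have hB0card : (insert (t+1) B').card = d + 1 := by
          rw [Finset.card_insert_of_notMem htB', hB'card]
        refine Finset.card_bij' (fun P _ => P.erase (blockOf P (t+1)))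
          (fun Q _ => insert (insert (t+1) B') Q) ?_ ?_ ?_ ?_
        · -- forward into target
          intro P hP
          obtain ⟨hP1, hP2⟩ := mem_filter.1 hP
          obtain ⟨hBP, hBmem, hBsub, hBcard, hfil⟩ := fiber_block_facts hOsub hc htm hP1
          have hBeq : blockOf P (t+1) = insert (t+1) B' := by
            rw [← hP2]; exact (Finset.insert_erase hBmem).symm
          rw [fiberF, mem_filter, mem_PartsF] at hP1
          obtain ⟨⟨hne, hdisj, hU⟩, hgt, hcond⟩ := hP1
          show P.erase (blockOf P (t+1)) ∈ fiberF m (t+1) S (O \ B')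
          have hxB : ∀ x, x ∈ blockOf P (t+1) ↔ (x = t+1 ∨ x ∈ B') := by
            intro x; rw [hBeq]; exact Finset.mem_insert
          rw [fiberF, mem_filter, mem_PartsF]
          refine ⟨⟨?_, ?_, ?_⟩, ?_, ?_⟩
          · intro C hC; exact hne C (Finset.mem_of_mem_erase hC)
          · intro C hC D hD hne'
            exact hdisj C (Finset.mem_of_mem_erase hC) D (Finset.mem_of_mem_erase hD) hne'
          · ext x
            simp only [Finset.mem_biUnion, Finset.mem_erase, id_eq, mem_union,
              mem_sdiff, mem_Icc]
            constructor
            · rintro ⟨C, ⟨hCneB, hCP⟩, hxC⟩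
              have hxg : x ∈ O ∪ Finset.Icc (t+1) m := by
                rw [← hU]; exact Finset.mem_biUnion.2 ⟨C, hCP, hxC⟩
              have hxnB : x ∉ blockOf P (t+1) := fun hxB =>
                (Finset.disjoint_left.1 (hdisj C hCP _ hBP hCneB)) hxC hxB
              rw [hxB] at hxnB
              push_neg at hxnB
              rcases Finset.mem_union.1 hxg with h | h
              · exact Or.inl ⟨h, hxnB.2⟩
              · have := Finset.mem_Icc.1 h
                exact Or.inr ⟨by omega, by omega⟩
            · have hget : ∀ x, x ∈ O ∪ Finset.Icc (t+1) m → x ∉ blockOf P (t+1) →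
                  ∃ C, (C ≠ blockOf P (t+1) ∧ C ∈ P) ∧ x ∈ C := by
                intro y hy hynB
                have : y ∈ P.biUnion id := by rw [hU]; exact hy
                obtain ⟨C, hC, hyC⟩ := Finset.mem_biUnion.1 this
                exact ⟨C, ⟨fun h => hynB (h ▸ hyC), hC⟩, hyC⟩
              rintro (⟨hxO, hxB'⟩ | ⟨hx1, hx2⟩)
              · have hxt := hOt x hxO
                refine hget x (Finset.mem_union_left _ hxO) ?_
                rw [hxB]; push_neg
                exact ⟨by omega, hxB'⟩
              · refine hget x (Finset.mem_union_right _ (Finset.mem_Icc.2 (by omega))) ?_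
                rw [hxB]; push_neg
                refine ⟨by omega, fun h => ?_⟩
                have := hB'le x h; omega
          · intro C hC
            obtain ⟨hCneB, hCP⟩ := Finset.mem_erase.1 hC
            by_contra h
            push_neg at h
            have hCf : C ∈ P.filter (fun C => ∀ x ∈ C, x ≤ t+1) :=
              mem_filter.2 ⟨hCP, fun x hx => by have := h x hx; omega⟩
            rw [hfil] at hCf
            exact hCneB (Finset.mem_singleton.1 hCf)
          · intro j hj hj'
            have hBfil : blockOf P (t+1) ∈ P.filter (fun C => ∀ x ∈ C, x ≤ j) := by
              refine mem_filter.2 ⟨hBP, fun x hx => ?_⟩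
              rcases (hxB x).1 hx with rfl | hx'
              · omega
              · have := hB'le x hx'; omega
            have hsum : closedCard (P.erase (blockOf P (t+1))) j + (blockOf P (t+1)).card
                = closedCard P j := by
              rw [closedCard, closedCard, Finset.filter_erase]
              exact Finset.sum_erase_add _ _ hBfil
            have := hcond j (by omega) hj'
            omega
        · -- backward into source
          intro Q hQ
          obtain ⟨hB0Q, hdisj2⟩ := insert_block_facts hOsub hB'O hQ
          rw [fiberF, mem_filter, mem_PartsF] at hQ
          obtain ⟨⟨hne, hdisj, hU⟩, hgt, hcond⟩ := hQ
          have hB0le : ∀ x ∈ insert (t+1) B', x ≤ t + 1 := by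
            intro x hx
            rcases Finset.mem_insert.1 hx with rfl | hx
            · exact le_refl _
            · have := hB'le x hx; omega
          have hfQ : ∀ j, t + 1 ≤ j →
              Q.filter (fun C => ∀ x ∈ C, x ≤ t+1) = ∅ := by
            intro j _
            rw [Finset.filter_eq_empty_iff]
            intro C hC hall
            obtain ⟨x, hx, hgtx⟩ := hgt C hC
            exact absurd (hall x hx) (by omega)
          show insert (insert (t+1) B') Q
              ∈ (fiberF m t S O).filter (fun P => (blockOf P (t+1)).erase (t+1) = B')
          rw [mem_filter]
          constructor
          · rw [fiberF, mem_filter, mem_PartsF]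
            refine ⟨⟨?_, hdisj2, ?_⟩, ?_, ?_⟩
            · intro C hC
              rcases Finset.mem_insert.1 hC with rfl | hC
              · exact ⟨t+1, Finset.mem_insert_self _ _⟩
              · exact hne C hC
            · rw [Finset.biUnion_insert, hU]
              ext x
              simp only [id_eq, mem_union, Finset.mem_insert, mem_sdiff, mem_Icc]
              constructor
              · rintro ((rfl | hxB') | (⟨hxO, hxnB'⟩ | ⟨hx1, hx2⟩))
                · exact Or.inr ⟨le_refl _, by omega⟩
                · exact Or.inl (hB'O hxB')
                · exact Or.inl hxO
                · exact Or.inr ⟨by omega, hx2⟩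
              · rintro (hxO | hIcc)
                · by_cases hxB' : x ∈ B'
                  · exact Or.inl (Or.inr hxB')
                  · exact Or.inr (Or.inl ⟨hxO, hxB'⟩)
                · rcases eq_or_lt_of_le hIcc.1 with h | h
                  · exact Or.inl (Or.inl h.symm)
                  · exact Or.inr (Or.inr ⟨by omega, hIcc.2⟩)
            · intro C hC
              rcases Finset.mem_insert.1 hC with rfl | hC
              · exact ⟨t+1, Finset.mem_insert_self _ _, by omega⟩
              · obtain ⟨x, hx, hgtx⟩ := hgt C hC
                exact ⟨x, hx, by omega⟩
            · intro j hj hj'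
              rcases eq_or_lt_of_le (show t + 1 ≤ j from hj) with hj1 | hj1
              · have hje : j = t + 1 := hj1.symm
                subst hje
                have hcc : closedCard (insert (insert (t+1) B') Q) (t+1)
                    = (insert (t+1) B').card := by
                  rw [closedCard, Finset.filter_insert, if_pos hB0le, hfQ (t+1) (le_refl _)]
                  simp
                rw [hcc, hB0card]
                omega
              · have hnotin : insert (t+1) B' ∉ Q.filter (fun C => ∀ x ∈ C, x ≤ j) :=
                  fun h => hB0Q (mem_filter.1 h).1
                have hcc : closedCard (insert (insert (t+1) B') Q) j
                    = (insert (t+1) B').card + closedCard Q j := by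
                  rw [closedCard, Finset.filter_insert,
                    if_pos (fun x hx => le_trans (hB0le x hx) (by omega)),
                    Finset.sum_insert hnotin]
                  rfl
                have := hcond j (by omega) hj'
                rw [hcc, hB0card]
                omega
          · have hbl : blockOf (insert (insert (t+1) B') Q) (t+1) = insert (t+1) B' :=
              blockOf_eq hdisj2 (Finset.mem_insert_self _ _) (Finset.mem_insert_self _ _)
            show (blockOf (insert (insert (t+1) B') Q) (t+1)).erase (t+1) = B'
            rw [hbl, Finset.erase_insert htB']
        · -- left inverse
          intro P hP
          obtain ⟨hP1, hP2⟩ := mem_filter.1 hP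
          obtain ⟨hBP, hBmem, hBsub, hBcard, hfil⟩ := fiber_block_facts hOsub hc htm hP1
          have hBeq : insert (t+1) B' = blockOf P (t+1) := by
            rw [← hP2]; exact Finset.insert_erase hBmem
          show insert (insert (t+1) B') (P.erase (blockOf P (t+1))) = P
          rw [hBeq, Finset.insert_erase hBP]
        · -- right inverse
          intro Q hQ
          obtain ⟨hB0Q, hdisj2⟩ := insert_block_facts hOsub hB'O hQ
          have hbl : blockOf (insert (insert (t+1) B') Q) (t+1) = insert (t+1) B' :=
            blockOf_eq hdisj2 (Finset.mem_insert_self _ _) (Finset.mem_insert_self _ _)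
          show (insert (insert (t+1) B') Q).erase
              (blockOf (insert (insert (t+1) B') Q) (t+1)) = Q
          rw [hbl, Finset.erase_insert hB0Q]
      rw [hstep1, Finset.sum_congr rfl hstep2]
      have hIH : ∀ B' ∈ O.powersetCard d,
          (fiberF m (t+1) S (O \ B')).card
            = ∏ j ∈ (Finset.Ioc (t+1) m).filter (fun j => S (j-1) < S j),
                Nat.choose (j - 1 - S (j-1)) (j - S j) := by
        intro B' hB'
        obtain ⟨hB'O, hB'card⟩ := Finset.mem_powersetCard.1 hB'
        apply ih (t+1) (by omega)
        · intro x hx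
          have := hOt x ((Finset.sdiff_subset) hx)
          simp only [Finset.mem_Icc]; omega
        · rw [Finset.card_sdiff_of_subset hB'O, hB'card]
          omega
      rw [Finset.sum_congr rfl hIH, Finset.sum_const, Finset.card_powersetCard, smul_eq_mul]
      have hsplit : (Finset.Ioc t m).filter (fun j => S (j-1) < S j)
          = insert (t+1) ((Finset.Ioc (t+1) m).filter (fun j => S (j-1) < S j)) := by
        ext j
        simp only [mem_filter, mem_Ioc, mem_insert]
        constructor
        · rintro ⟨⟨h1, h2⟩, h3⟩
          rcases eq_or_lt_of_le (show t + 1 ≤ j from h1) with h | h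
          · exact Or.inl h.symm
          · exact Or.inr ⟨⟨h, h2⟩, h3⟩
        · rintro (rfl | ⟨⟨h1, h2⟩, h3⟩)
          · exact ⟨⟨by omega, by omega⟩, by rw [Nat.add_sub_cancel]; omega⟩
          · exact ⟨⟨by omega, h2⟩, h3⟩
      rw [hsplit, Finset.prod_insert (by simp)]
      have harith : (t + 1 - 1 - S (t+1-1)).choose (t + 1 - S (t+1)) = O.card.choose d := by
        rw [Nat.add_sub_cancel]
        have h1 : t - S t = O.card := by omega
        have h2 : t + 1 - S (t+1) = O.card - d := by omega
        rw [h1, h2, Nat.choose_symm hdO]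
      rw [harith]

lemma isPartitionOf_iff {m : ℕ} {P : Finset (Finset ℕ)} :
    IsPartitionOf m P ↔
      ((∀ C ∈ P, C.Nonempty) ∧ (∀ C ∈ P, ∀ D ∈ P, C ≠ D → Disjoint C D) ∧
        P.biUnion id = Finset.Icc 1 m) := by
  constructor
  · rintro ⟨h1, h2⟩
    refine ⟨fun C hC => (h1 C hC).1, ?_, ?_⟩
    · intro C hC D hD hne
      rw [Finset.disjoint_left]
      intro x hxC hxD
      have hx : x ∈ Finset.Icc 1 m := (h1 C hC).2 hxC
      obtain ⟨E, -, hEuniq⟩ := h2 x hx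
      exact hne ((hEuniq C ⟨hC, hxC⟩).trans (hEuniq D ⟨hD, hxD⟩).symm)
    · ext x
      simp only [Finset.mem_biUnion, id_eq]
      constructor
      · rintro ⟨C, hC, hxC⟩
        exact (h1 C hC).2 hxC
      · intro hx
        obtain ⟨C, ⟨hC, hxC⟩, -⟩ := h2 x hx
        exact ⟨C, hC, hxC⟩
  · rintro ⟨h1, h2, h3⟩
    constructor
    · intro C hC
      refine ⟨h1 C hC, ?_⟩
      intro x hx
      rw [← h3]
      exact Finset.mem_biUnion.2 ⟨C, hC, hx⟩
    · intro i hi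
      rw [← h3] at hi
      obtain ⟨C, hC, hiC⟩ := Finset.mem_biUnion.1 hi
      refine ⟨C, ⟨hC, hiC⟩, ?_⟩
      rintro D ⟨hD, hiD⟩
      by_contra hne
      exact (Finset.disjoint_left.1 (h2 D hD C hC hne)) hiD hiC

lemma closedCard_le_of_parts {P : Finset (Finset ℕ)}
    (hdisj : ∀ C ∈ P, ∀ D ∈ P, C ≠ D → Disjoint C D)
    (hone : ∀ C ∈ P, ∀ x ∈ C, 1 ≤ x) (j : ℕ) : closedCard P j ≤ j := by
  have hkey : closedCard P j = ((P.filter (fun C => ∀ x ∈ C, x ≤ j)).biUnion id).card := by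
    rw [closedCard]
    exact (Finset.card_biUnion (fun C hC D hD hne =>
      hdisj C (Finset.mem_filter.1 hC).1 D (Finset.mem_filter.1 hD).1 hne)).symm
  rw [hkey]
  have hsub : (P.filter (fun C => ∀ x ∈ C, x ≤ j)).biUnion id ⊆ Finset.Icc 1 j := by
    intro x hx
    obtain ⟨C, hC, hxC⟩ := Finset.mem_biUnion.1 hx
    obtain ⟨hCP, hCle⟩ := Finset.mem_filter.1 hC
    exact Finset.mem_Icc.2 ⟨hone C hCP x hxC, hCle x hxC⟩
  calc ((P.filter (fun C => ∀ x ∈ C, x ≤ j)).biUnion id).card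
      ≤ (Finset.Icc 1 j).card := Finset.card_le_card hsub
    _ = j := by rw [Nat.card_Icc]; omega

lemma closedCard_top {m : ℕ} {P : Finset (Finset ℕ)}
    (hdisj : ∀ C ∈ P, ∀ D ∈ P, C ≠ D → Disjoint C D)
    (hU : P.biUnion id = Finset.Icc 1 m)
    (hsub : ∀ C ∈ P, ∀ x ∈ C, x ≤ m) : closedCard P m = m := by
  rw [closedCard, Finset.filter_true_of_mem (fun C hC => hsub C hC)]
  have h : (P.biUnion id).card = ∑ u ∈ P, (id u).card := Finset.card_biUnion hdisj
  rw [hU, Nat.card_Icc] at h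
  simp only [id_eq] at h
  omega

lemma closedCard_mono (P : Finset (Finset ℕ)) {j k : ℕ} (h : j ≤ k) :
    closedCard P j ≤ closedCard P k := by
  apply Finset.sum_le_sum_of_subset
  intro C hC
  obtain ⟨hCP, hCle⟩ := Finset.mem_filter.1 hC
  exact Finset.mem_filter.2 ⟨hCP, fun x hx => le_trans (hCle x hx) h⟩

noncomputable def statTuple (m : ℕ) (P : Finset (Finset ℕ)) : Fin (m+1) → Fin (m+1) :=
  fun j => ⟨min (closedCard P (j : ℕ)) m, Nat.lt_succ_of_le (Nat.min_le_right _ _)⟩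

lemma pathFun_eq {m : ℕ} {S : Fin (m+1) → Fin (m+1)} {j : ℕ} (h : j < m + 1) :
    pathFun m S j = (S ⟨j, h⟩ : ℕ) := dif_pos h

lemma partition_facts {m : ℕ} {P : Finset (Finset ℕ)} (hP : IsPartitionOf m P) :
    (∀ j, j ≤ m → pathFun m (statTuple m P) j = closedCard P j)
    ∧ IsSPath m (pathFun m (statTuple m P)) := by
  obtain ⟨h1, h2, h3⟩ := isPartitionOf_iff.1 hP
  have hsub' : ∀ C ∈ P, C ⊆ Finset.Icc 1 m := fun C hC => (hP.1 C hC).2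
  have hone : ∀ C ∈ P, ∀ x ∈ C, 1 ≤ x := fun C hC x hx =>
    (Finset.mem_Icc.1 (hsub' C hC hx)).1
  have hlem : ∀ C ∈ P, ∀ x ∈ C, x ≤ m := fun C hC x hx =>
    (Finset.mem_Icc.1 (hsub' C hC hx)).2
  have hclosedm : closedCard P m = m := closedCard_top h2 h3 hlem
  have heq : ∀ j, j ≤ m → pathFun m (statTuple m P) j = closedCard P j := by
    intro j hj
    rw [pathFun_eq (by omega)]
    exact min_eq_left (le_trans (closedCard_mono P hj) (le_of_eq hclosedm))
  refine ⟨heq, ?_, ?_, ?_⟩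
  · rw [heq 0 (by omega)]
    have := closedCard_le_of_parts h2 hone 0
    omega
  · rw [heq m (le_refl _)]
    exact hclosedm
  · intro j hj1 hj2
    rw [heq j (by omega), heq (j+1) (by omega)]
    exact le_min (closedCard_le_of_parts h2 hone j) (closedCard_mono P (by omega))


theorem sum_prod_choose_eq_bell (m : ℕ) :
    (∑ S : Fin (m + 1) → Fin (m + 1),
      if IsSPath m (pathFun m S) then
        ∏ j ∈ (Finset.Icc 1 m).filter (fun j => pathFun m S (j - 1) < pathFun m S j),
          Nat.choose (j - 1 - pathFun m S (j - 1)) (j - pathFun m S j)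
      else 0) =
    {P : Finset (Finset ℕ) | IsPartitionOf m P}.ncard := by
  classical
  have hFdef : {P : Finset (Finset ℕ) | IsPartitionOf m P}
      = ↑(((Finset.Icc 1 m).powerset.powerset).filter (fun P => IsPartitionOf m P)) := by
    ext P
    simp only [Set.mem_setOf_eq, Finset.coe_filter, Finset.mem_powerset]
    constructor
    · intro h
      refine ⟨?_, h⟩
      intro C hC
      exact Finset.mem_powerset.2 (h.1 C hC).2
    · exact And.right
  rw [hFdef, Set.ncard_coe_finset]
  rw [Finset.card_eq_sum_card_fiberwise
    (f := statTuple m) (t := (Finset.univ : Finset (Fin (m+1) → Fin (m+1))))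
    (fun P _ => Finset.mem_univ _)]
  apply Finset.sum_congr rfl
  intro S _
  by_cases hS : IsSPath m (pathFun m S)
  · rw [if_pos hS]
    obtain ⟨hS0, hSm, hSmid⟩ := hS
    have hcount := count_lemma m (pathFun m S) hS0 hSm
      (fun j hj1 hj2 => ⟨le_trans (hSmid j hj1 hj2) (min_le_left _ _),
        le_trans (hSmid j hj1 hj2) (min_le_right _ _)⟩)
      m 0 (by omega) ∅ (Finset.empty_subset _) (by simp [hS0])
    have hIoc : Finset.Ioc 0 m = Finset.Icc 1 m := by
      ext x; simp only [Finset.mem_Ioc, Finset.mem_Icc]; omega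
    rw [hIoc] at hcount
    have hsets : Finset.filter (fun P => statTuple m P = S)
        (Finset.filter (fun P => IsPartitionOf m P) (Finset.Icc 1 m).powerset.powerset)
        = fiberF m 0 (pathFun m S) ∅ := by
      ext P
      rw [Finset.mem_filter, Finset.mem_filter, fiberF, Finset.mem_filter, mem_PartsF,
        Finset.empty_union]
      constructor
      · rintro ⟨⟨hpp, hP⟩, hstat⟩
        obtain ⟨heq, hpath⟩ := partition_facts hP
        obtain ⟨h1, h2, h3⟩ := isPartitionOf_iff.1 hP
        refine ⟨⟨h1, h2, h3⟩, ?_, ?_⟩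
        · intro C hC
          obtain ⟨x, hx⟩ := h1 C hC
          exact ⟨x, hx, (Finset.mem_Icc.1 ((hP.1 C hC).2 hx)).1⟩
        · intro j hj1 hj2
          have hthis := heq j hj2
          rw [hstat] at hthis
          omega
      · rintro ⟨⟨h1, h2, h3⟩, hpos, hcond⟩
        have hP : IsPartitionOf m P := isPartitionOf_iff.2 ⟨h1, h2, h3⟩
        obtain ⟨heq, hpath⟩ := partition_facts hP
        have hone : ∀ C ∈ P, ∀ x ∈ C, 1 ≤ x := fun C hC x hx =>
          (Finset.mem_Icc.1 ((hP.1 C hC).2 hx)).1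
        have hall : ∀ j, j ≤ m → closedCard P j = pathFun m S j := by
          intro j hj
          rcases Nat.eq_zero_or_pos j with rfl | hj0
          · have := closedCard_le_of_parts h2 hone 0
            omega
          · have := hcond j hj0 hj
            omega
        refine ⟨⟨?_, hP⟩, ?_⟩
        · rw [Finset.mem_powerset]
          intro C hC
          rw [Finset.mem_powerset]
          exact (hP.1 C hC).2
        · funext jf
          apply Fin.ext
          have hjm : (jf : ℕ) ≤ m := by omega
          have h1' := heq (jf : ℕ) hjm
          rw [pathFun_eq jf.isLt, Fin.eta] at h1'
          have h2' := hall (jf : ℕ) hjm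
          rw [pathFun_eq jf.isLt, Fin.eta] at h2'
          show ((statTuple m P jf : Fin (m+1)) : ℕ) = ((S jf : Fin (m+1)) : ℕ)
          omega
    rw [hsets, hcount]
  · rw [if_neg hS]
    symm
    rw [Finset.card_eq_zero, Finset.filter_eq_empty_iff]
    intro P hPF hstat
    have hP : IsPartitionOf m P := (Finset.mem_filter.1 hPF).2
    have := (partition_facts hP).2
    rw [hstat] at this
    exact hS this
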